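/- Fix b,c > 0. There exists a₀ > 0 such that for every a with 0 < a < a₀, if μ̄ is the weak limit of the measures (μ̂_n) associated with parameters (a,b,c), then μ̄-almost surely there is no infinite type-a cluster. -/

import Mathlib

open MeasureTheory Filter Topology

/-- The three edge types of the hexagonal lattice: `a` (horizontal),
`b` (NW/SE), `c` (NE/SW). -/
inductive EType : Type
  | a : EType
  | b : EType
  | c : EType
deriving DecidableEq

instance : Fintype EType where
  elems := {EType.a, EType.b, EType.c}
  complete := by intro x; cases x <;> simp

/-- A vertex of the (toroidal or infinite) hexagonal lattice with coordinates in `α`. -/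
abbrev HexVtx (α : Type) : Type := (α × α) × Bool

/-- An edge of the hexagonal lattice: its type together with coordinates in `α`. -/
abbrev HexEdge (α : Type) : Type := EType × α × α

/-- The `s`-type edge incident to the vertex `v`. -/
def edgeAt {α : Type} [Sub α] [One α] (v : HexVtx α) : EType → HexEdge α
  | .a => (.a, v.1)
  | .b => if v.2 then (.b, v.1) else (.b, (v.1.1, v.1.2 - 1))
  | .c => if v.2 then (.c, v.1) else (.c, (v.1.1 - 1, v.1.2))

/-- The two endpoints of an edge. -/
def ends {α : Type} [Add α] [One α] : HexEdge α → HexVtx α × HexVtx α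
  | (.a, x, y) => (((x, y), false), ((x, y), true))
  | (.b, x, y) => (((x, y), true), ((x, y + 1), false))
  | (.c, x, y) => (((x, y), true), ((x + 1, y), false))

/-- The 1-2 model vertex weight of a triple of incident edge spins. -/
def vWt (a b c : ℝ) (sa sb sc : Bool) : ℝ :=
  if sb = sc ∧ sa ≠ sb then a
  else if sa = sc ∧ sb ≠ sa then b
  else if sa = sb ∧ sc ≠ sa then c
  else 0

/-- Vertices of the toroidal lattice `H_n`. -/
abbrev VF (n : ℕ) : Type := HexVtx (ZMod n)

/-- Edges of the toroidal lattice `H_n`. -/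
abbrev EF (n : ℕ) : Type := HexEdge (ZMod n)

/-- Spin configurations on the edges of `H_n`; `true` means spin `+1`. -/
abbrev ConfF (n : ℕ) : Type := EF n → Bool

/-- The 1-2 model weight of a configuration on `H_n`. -/
def confWt (n : ℕ) [NeZero n] (a b c : ℝ) (σ : ConfF n) : ℝ :=
  ∏ v : VF n, vWt a b c (σ (edgeAt v .a)) (σ (edgeAt v .b)) (σ (edgeAt v .c))

/-- The 1-2 model partition function on `H_n`. -/
noncomputable def Zn (n : ℕ) [NeZero n] (a b c : ℝ) : ℝ :=
  ∑ σ : ConfF n, confWt n a b c σ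

/-- Vertices of the infinite hexagonal lattice `H`. -/
abbrev VI : Type := HexVtx ℤ

/-- Edges of the infinite hexagonal lattice `H`. -/
abbrev EI : Type := HexEdge ℤ

/-- Configurations on the infinite lattice: the space `Ω = {−1,+1}^𝔼`. -/
abbrev Config : Type := EI → Bool

/-- Periodic lift of a configuration on `H_n` to the infinite lattice. -/
def liftConf (n : ℕ) (σ : ConfF n) : Config :=
  fun e => σ (e.1, ((e.2.1 : ZMod n), (e.2.2 : ZMod n)))

/-- The pushforward `μ̂_n` on `Ω` of the 1-2 model measure `μ_n` on `H_n`. -/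
noncomputable def muHat (n : ℕ) [NeZero n] (a b c : ℝ) : Measure Config :=
  ∑ σ : ConfF n, ENNReal.ofReal (confWt n a b c σ / Zn n a b c) •
    Measure.dirac (liftConf n σ)

/-- `μ` is the weak limit of the sequence `μ̂_n` (tested against all bounded
continuous functions). -/
def IsWeakLimit (a b c : ℝ) (μ : Measure Config) : Prop :=
  IsProbabilityMeasure μ ∧
    ∀ f : BoundedContinuousFunction Config ℝ,
      Tendsto (fun n : ℕ => ∫ ω, f ω ∂ muHat (n + 1) a b c) atTop (𝓝 (∫ ω, f ω ∂ μ))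

/-- Adjacency in the hexagonal lattice `H`. -/
def hexAdj (u v : VI) : Prop :=
  ∃ e : EI, ends e = (u, v) ∨ ends e = (v, u)

/-- The vertex `v` has type `a` in the configuration `ω`: the spins of the two
non-horizontal incident edges agree and differ from that of the `a`-type edge. -/
def typeA (ω : Config) (v : VI) : Prop :=
  ω (edgeAt v .b) = ω (edgeAt v .c) ∧ ω (edgeAt v .a) ≠ ω (edgeAt v .b)

/-- Adjacency in the subgraph of `H` induced by the type-`a` vertices. -/
def aAdj (ω : Config) (u v : VI) : Prop :=
  hexAdj u v ∧ typeA ω u ∧ typeA ω v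

/-- The type-`a` cluster of the vertex `v` in the configuration `ω`. -/
def aCluster (ω : Config) (v : VI) : Set VI :=
  {u : VI | Relation.ReflTransGen (aAdj ω) v u}

namespace H12

section Geo
variable {α : Type} [AddGroup α] [One α]

/-- The other endpoint of the `t`-type edge at `x`. -/
def otherEnd (x : HexVtx α) (t : EType) : HexVtx α :=
  match t with
  | .a => (x.1, !x.2)
  | .b => if x.2 then ((x.1.1, x.1.2 + 1), false) else ((x.1.1, x.1.2 - 1), true)
  | .c => if x.2 then ((x.1.1 + 1, x.1.2), false) else ((x.1.1 - 1, x.1.2), true)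

lemma ends_edgeAt (x : HexVtx α) (t : EType) :
    ends (edgeAt x t) = (x, otherEnd x t) ∨ ends (edgeAt x t) = (otherEnd x t, x) := by
  obtain ⟨⟨p, q⟩, b⟩ := x
  cases t <;> cases b <;>
    simp [edgeAt, ends, otherEnd, sub_add_cancel]

lemma edgeAt_fst (x : HexVtx α) (t : EType) : (edgeAt x t).1 = t := by
  obtain ⟨⟨p, q⟩, b⟩ := x
  cases t <;> cases b <;> simp [edgeAt]

lemma edgeAt_ends_fst (e : HexEdge α) : edgeAt (ends e).1 e.1 = e := by
  obtain ⟨t, p, q⟩ := e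
  cases t <;> simp [ends, edgeAt, add_sub_cancel_right]

lemma edgeAt_ends_snd (e : HexEdge α) : edgeAt (ends e).2 e.1 = e := by
  obtain ⟨t, p, q⟩ := e
  cases t <;> simp [ends, edgeAt, add_sub_cancel_right]

lemma eq_end_of_edgeAt_eq {x : HexVtx α} {t : EType} {e : HexEdge α}
    (h : edgeAt x t = e) : x = (ends e).1 ∨ x = (ends e).2 := by
  subst h
  rcases ends_edgeAt x t with h | h <;> rw [h]
  · left; rfl
  · right; rfl

lemma otherEnd_a_a (x : HexVtx α) : otherEnd (otherEnd x .a) .a = x := by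
  obtain ⟨⟨p, q⟩, b⟩ := x; cases b <;> simp [otherEnd]

end Geo

lemma hexAdj_iff {x y : VI} : hexAdj x y ↔ ∃ t, y = otherEnd x t := by
  constructor
  · rintro ⟨e, h | h⟩
    · refine ⟨e.1, ?_⟩
      have h1 : x = (ends e).1 := by rw [h]
      have h2 : y = (ends e).2 := by rw [h]
      have h3 : edgeAt x e.1 = e := by rw [h1]; exact edgeAt_ends_fst e
      rcases ends_edgeAt x e.1 with h4 | h4 <;> rw [h3] at h4
      · rw [h2, h4]
      · have hx : x = otherEnd x e.1 := h1.trans (by rw [h4])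
        have hy : y = x := h2.trans (by rw [h4])
        rw [hy]; exact hx
    · refine ⟨e.1, ?_⟩
      have h1 : x = (ends e).2 := by rw [h]
      have h2 : y = (ends e).1 := by rw [h]
      have h3 : edgeAt x e.1 = e := by rw [h1]; exact edgeAt_ends_snd e
      rcases ends_edgeAt x e.1 with h4 | h4 <;> rw [h3] at h4
      · have hx : x = otherEnd x e.1 := h1.trans (by rw [h4])
        have hy : y = x := h2.trans (by rw [h4])
        rw [hy]; exact hx
      · rw [h2, h4]
  · rintro ⟨t, rfl⟩
    refine ⟨edgeAt x t, ?_⟩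
    rcases ends_edgeAt x t with h | h
    · left; exact h
    · right; exact h

lemma otherEnd_coord (x : VI) (t : EType) :
    |(otherEnd x t).1.1 - x.1.1| ≤ 1 ∧ |(otherEnd x t).1.2 - x.1.2| ≤ 1 := by
  obtain ⟨⟨p, q⟩, b⟩ := x
  cases t <;> cases b <;> simp [otherEnd, abs_le] <;> omega

lemma edgeAt_coord (x : VI) (t : EType) :
    |(edgeAt x t).2.1 - x.1.1| ≤ 1 ∧ |(edgeAt x t).2.2 - x.1.2| ≤ 1 := by
  obtain ⟨⟨p, q⟩, b⟩ := x
  cases t <;> cases b <;> simp [edgeAt, abs_le] <;> omega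

/-- Decoding of a path from a start vertex and a sequence of step types. -/
def decPath (v : VI) (s : ℕ → EType) : ℕ → VI
  | 0 => v
  | i + 1 => otherEnd (decPath v s i) (s i)

lemma decPath_coord (v : VI) (s : ℕ → EType) (i : ℕ) :
    |(decPath v s i).1.1 - v.1.1| ≤ (i : ℤ) ∧ |(decPath v s i).1.2 - v.1.2| ≤ (i : ℤ) := by
  induction i with
  | zero => simp [decPath]
  | succ i ih =>
    have h := otherEnd_coord (decPath v s i) (s i)
    have t1 := abs_sub_le (decPath v s (i + 1)).1.1 (decPath v s i).1.1 v.1.1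
    have t2 := abs_sub_le (decPath v s (i + 1)).1.2 (decPath v s i).1.2 v.1.2
    have hd : decPath v s (i + 1) = otherEnd (decPath v s i) (s i) := rfl
    rw [hd] at t1 t2 ⊢
    push_cast
    constructor <;> [linarith [h.1, ih.1, t1]; linarith [h.2, ih.2, t2]]

lemma decPath_congr (v : VI) {s s' : ℕ → EType} (i : ℕ)
    (h : ∀ j, j < i → s j = s' j) : decPath v s i = decPath v s' i := by
  induction i with
  | zero => rfl
  | succ i ih =>
    show otherEnd (decPath v s i) (s i) = otherEnd (decPath v s' i) (s' i)
    rw [ih (fun j hj => h j (Nat.lt_succ_of_lt hj)), h i (Nat.lt_succ_self i)]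

end H12
namespace H12

/-- Torus version of the type-`a` condition. -/
def tTypeA {n : ℕ} (σ : ConfF n) (u : VF n) : Prop :=
  σ (edgeAt u .b) = σ (edgeAt u .c) ∧ σ (edgeAt u .a) ≠ σ (edgeAt u .b)

lemma vWt_nonneg {a b c : ℝ} (ha : 0 ≤ a) (hb : 0 ≤ b) (hc : 0 ≤ c)
    (sa sb sc : Bool) : 0 ≤ vWt a b c sa sb sc := by
  unfold vWt; split_ifs <;> first | assumption | exact le_refl 0

lemma vWt_typeA {a b c : ℝ} {sa sb sc : Bool} (h1 : sb = sc) (h2 : sa ≠ sb) :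
    vWt a b c sa sb sc = a := by
  cases sa <;> cases sb <;> cases sc <;> simp_all [vWt]

lemma vWt_flip_b {a b c : ℝ} {sa sb sc : Bool} (h1 : sb = sc) (h2 : sa ≠ sb) :
    vWt a b c sa (!sb) sc = c := by
  cases sa <;> cases sb <;> cases sc <;> simp_all [vWt]

lemma vWt_flip_c {a b c : ℝ} {sa sb sc : Bool} (h1 : sb = sc) (h2 : sa ≠ sb) :
    vWt a b c sa sb (!sc) = b := by
  cases sa <;> cases sb <;> cases sc <;> simp_all [vWt]

/-- The vertex weight of `σ` at `u`. -/
def vWtAt (n : ℕ) (a b c : ℝ) (σ : ConfF n) (u : VF n) : ℝ :=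
  vWt a b c (σ (edgeAt u .a)) (σ (edgeAt u .b)) (σ (edgeAt u .c))

lemma confWt_eq (n : ℕ) [NeZero n] (a b c : ℝ) (σ : ConfF n) :
    confWt n a b c σ = ∏ u : VF n, vWtAt n a b c σ u := rfl

lemma confWt_nonneg (n : ℕ) [NeZero n] {a b c : ℝ} (ha : 0 ≤ a) (hb : 0 ≤ b)
    (hc : 0 ≤ c) (σ : ConfF n) : 0 ≤ confWt n a b c σ :=
  Finset.prod_nonneg fun _ _ => vWt_nonneg ha hb hc _ _ _

lemma Zn_pos (n : ℕ) [NeZero n] {a b c : ℝ} (ha : 0 < a) (hb : 0 < b) (hc : 0 < c) :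
    0 < Zn n a b c := by
  classical
  set σ₀ : ConfF n := fun e => if e.1 = EType.c then false else true with hσ₀
  have hval : confWt n a b c σ₀ = c ^ Fintype.card (VF n) := by
    rw [confWt_eq]
    rw [Finset.prod_congr rfl (fun u _ => ?_), Finset.prod_const, Finset.card_univ]
    show vWtAt n a b c σ₀ u = c
    have h1 : σ₀ (edgeAt u .a) = true := by simp [hσ₀, edgeAt_fst]
    have h2 : σ₀ (edgeAt u .b) = true := by simp [hσ₀, edgeAt_fst]
    have h3 : σ₀ (edgeAt u .c) = false := by simp [hσ₀, edgeAt_fst]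
    unfold vWtAt
    rw [h1, h2, h3]
    simp [vWt]
  have hpos : 0 < confWt n a b c σ₀ := by
    rw [hval]; exact pow_pos hc _
  refine lt_of_lt_of_le hpos ?_
  exact Finset.single_le_sum (fun σ _ => confWt_nonneg n ha.le hb.le hc.le σ)
    (Finset.mem_univ σ₀)

/-- Projection of an infinite-lattice vertex to the torus. -/
def pV (n : ℕ) (x : VI) : VF n := (((x.1.1 : ZMod n), (x.1.2 : ZMod n)), x.2)

/-- Projection of an infinite-lattice edge to the torus. -/
def pE (n : ℕ) (e : EI) : EF n := (e.1, ((e.2.1 : ZMod n), (e.2.2 : ZMod n)))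

lemma liftConf_eq (n : ℕ) (σ : ConfF n) (e : EI) : liftConf n σ e = σ (pE n e) := rfl

lemma pE_fst (n : ℕ) (e : EI) : (pE n e).1 = e.1 := rfl

lemma pE_edgeAt (n : ℕ) (x : VI) (t : EType) :
    pE n (edgeAt x t) = edgeAt (pV n x) t := by
  obtain ⟨⟨p, q⟩, b⟩ := x
  cases t <;> cases b <;> simp [edgeAt, pE, pV, Int.cast_sub, Int.cast_one]

lemma ends_pE (n : ℕ) (e : EI) :
    ends (pE n e) = (pV n (ends e).1, pV n (ends e).2) := by
  obtain ⟨t, p, q⟩ := e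
  cases t <;> simp [ends, pE, pV, Int.cast_add, Int.cast_one]

lemma typeA_lift_iff (n : ℕ) (σ : ConfF n) (x : VI) :
    typeA (liftConf n σ) x ↔ tTypeA σ (pV n x) := by
  have h : ∀ t, liftConf n σ (edgeAt x t) = σ (edgeAt (pV n x) t) := fun t => by
    rw [liftConf_eq, pE_edgeAt]
  unfold typeA tTypeA
  rw [h .a, h .b, h .c]

lemma pV_inj {n : ℕ} {x y : VI} {B : ℤ}
    (hx1 : |x.1.1| ≤ B) (hx2 : |x.1.2| ≤ B) (hy1 : |y.1.1| ≤ B) (hy2 : |y.1.2| ≤ B)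
    (hB : 2 * B < (n : ℤ)) (h : pV n x = pV n y) : x = y := by
  have hb : x.2 = y.2 := congrArg (fun z => z.2) h
  have h1 : ((x.1.1 : ZMod n)) = (y.1.1 : ZMod n) := congrArg (fun z => z.1.1) h
  have h2 : ((x.1.2 : ZMod n)) = (y.1.2 : ZMod n) := congrArg (fun z => z.1.2) h
  have key : ∀ u w : ℤ, |u| ≤ B → |w| ≤ B → ((u : ZMod n) = (w : ZMod n)) → u = w := by
    intro u w hu hw huw
    have hz : ((u - w : ℤ) : ZMod n) = 0 := by push_cast; rw [huw]; ring
    have hdvd : (n : ℤ) ∣ (u - w) := (ZMod.intCast_zmod_eq_zero_iff_dvd _ n).mp hz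
    have habs : |u - w| < (n : ℤ) := by
      calc |u - w| ≤ |u| + |w| := abs_sub u w
        _ ≤ 2 * B := by linarith
        _ < n := hB
    have := Int.eq_zero_of_abs_lt_dvd hdvd habs
    linarith
  have e1 : x.1.1 = y.1.1 := key _ _ hx1 hy1 h1
  have e2 : x.1.2 = y.1.2 := key _ _ hx2 hy2 h2
  exact Prod.ext (Prod.ext e1 e2) hb

end H12
namespace H12

open scoped Classical

lemma flip_sum_le (n : ℕ) [NeZero n] {a b c : ℝ} (ha : 0 < a) (hb : 0 < b) (hc : 0 < c)
    (k : ℕ) (m : Fin k → EF n) (hma : ∀ i, (m i).1 ≠ EType.a)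
    (hinj : Function.Injective fun z : Fin k × Bool =>
      if z.2 then (ends (m z.1)).1 else (ends (m z.1)).2) :
    ∑ σ ∈ Finset.univ.filter
        (fun σ : ConfF n => ∀ i, tTypeA σ (ends (m i)).1 ∧ tTypeA σ (ends (m i)).2),
      confWt n a b c σ ≤ (a / min b c) ^ (2 * k) * Zn n a b c := by
  classical
  set δ := min b c with hδdef
  have hδ : 0 < δ := lt_min hb hc
  set pt : Fin k × Bool → VF n :=
    fun z => if z.2 then (ends (m z.1)).1 else (ends (m z.1)).2 with hpt
  set E : Finset (VF n) := Finset.image pt Finset.univ with hE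
  have hEcard : E.card = 2 * k := by
    rw [hE, Finset.card_image_of_injective _ hinj, Finset.card_univ]
    simp [Fintype.card_prod]
    ring
  set M : Finset (EF n) := Finset.image m Finset.univ with hM
  set Φ : ConfF n → ConfF n := fun σ e => if e ∈ M then !σ e else σ e with hΦ
  have hΦΦ : ∀ σ, Φ (Φ σ) = σ := by
    intro σ; funext e; simp only [hΦ]; split <;> simp
  have hΦinj : Function.Injective Φ := Function.LeftInverse.injective hΦΦ
  -- endpoints of m i are in E
  have hend_mem : ∀ (i : Fin k) (u : VF n),
      (u = (ends (m i)).1 ∨ u = (ends (m i)).2) → u ∈ E := by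
    rintro i u (rfl | rfl)
    · exact Finset.mem_image.mpr ⟨(i, true), Finset.mem_univ _, rfl⟩
    · exact Finset.mem_image.mpr ⟨(i, false), Finset.mem_univ _, rfl⟩
  -- vertices outside E see no flipped edge
  have hout : ∀ (σ : ConfF n) (u : VF n), u ∉ E → ∀ t, Φ σ (edgeAt u t) = σ (edgeAt u t) := by
    intro σ u hu t
    simp only [hΦ]
    rw [if_neg]
    intro hmem
    obtain ⟨i, _, hi⟩ := Finset.mem_image.mp hmem
    exact hu (hend_mem i u (eq_end_of_edgeAt_eq hi.symm))
  -- at an endpoint, exactly the edge of type (m i).1 is flipped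
  have hin : ∀ (σ : ConfF n) (i : Fin k) (u : VF n),
      (u = (ends (m i)).1 ∨ u = (ends (m i)).2) →
      Φ σ (edgeAt u (m i).1) = !σ (edgeAt u (m i).1) ∧
        ∀ t, t ≠ (m i).1 → Φ σ (edgeAt u t) = σ (edgeAt u t) := by
    intro σ i u hu
    constructor
    · have heq : edgeAt u (m i).1 = m i := by
        rcases hu with rfl | rfl
        · exact edgeAt_ends_fst (m i)
        · exact edgeAt_ends_snd (m i)
      simp only [hΦ]
      rw [if_pos]
      rw [heq]
      exact Finset.mem_image.mpr ⟨i, Finset.mem_univ _, rfl⟩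
    · intro t ht
      simp only [hΦ]
      rw [if_neg]
      intro hmem
      obtain ⟨j, _, hj⟩ := Finset.mem_image.mp hmem
      have ht' : t = (m j).1 := by
        have := edgeAt_fst u t
        rw [hj]; exact this.symm
      have hu' := eq_end_of_edgeAt_eq hj.symm
      -- u is an endpoint of both m i and m j; injectivity forces i = j
      have hij : i = j := by
        rcases hu with h1 | h1 <;> rcases hu' with h2 | h2
        · exact (Prod.mk.injEq .. ▸ (hinj (a₁ := (i, true)) (a₂ := (j, true))
            (by simp [hpt, ← h1, ← h2]) : (i, true) = (j, true))).1
        · exact absurd (hinj (a₁ := (i, true)) (a₂ := (j, false))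
            (by simp [hpt, ← h1, ← h2])) (by simp)
        · exact absurd (hinj (a₁ := (i, false)) (a₂ := (j, true))
            (by simp [hpt, ← h1, ← h2])) (by simp)
        · exact (Prod.mk.injEq .. ▸ (hinj (a₁ := (i, false)) (a₂ := (j, false))
            (by simp [hpt, ← h1, ← h2]) : (i, false) = (j, false))).1
      rw [← hij] at ht'
      exact ht ht'
  -- per-vertex bound
  have hvert : ∀ σ, (∀ i, tTypeA σ (ends (m i)).1 ∧ tTypeA σ (ends (m i)).2) →
      ∀ u : VF n, vWtAt n a b c σ u ≤ (if u ∈ E then a / δ else 1) * vWtAt n a b c (Φ σ) u := by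
    intro σ hσ u
    by_cases hu : u ∈ E
    · obtain ⟨z, _, hz⟩ := Finset.mem_image.mp hu
      obtain ⟨i, sl⟩ := z
      have hu' : u = (ends (m i)).1 ∨ u = (ends (m i)).2 := by
        cases sl
        · right; rw [← hz]; simp [hpt]
        · left; rw [← hz]; simp [hpt]
      have htA : tTypeA σ u := by
        rcases hu' with rfl | rfl
        · exact (hσ i).1
        · exact (hσ i).2
      have hflip := hin σ i u hu'
      have hold : vWtAt n a b c σ u = a := vWt_typeA htA.1 htA.2
      rw [if_pos hu]
      cases hτ : (m i).1 with
      | a => exact absurd hτ (hma i)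
      | b =>
        have hnew : vWtAt n a b c (Φ σ) u = c := by
          unfold vWtAt
          rw [hflip.2 .a (by rw [hτ]; exact fun h => by cases h),
            hflip.2 .c (by rw [hτ]; exact fun h => by cases h)]
          have := hflip.1; rw [hτ] at this; rw [this]
          exact vWt_flip_b htA.1 htA.2
        rw [hold, hnew, div_mul_eq_mul_div, le_div_iff₀ hδ]
        exact mul_le_mul_of_nonneg_left (min_le_right b c) ha.le
      | c =>
        have hnew : vWtAt n a b c (Φ σ) u = b := by
          unfold vWtAt
          rw [hflip.2 .a (by rw [hτ]; exact fun h => by cases h),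
            hflip.2 .b (by rw [hτ]; exact fun h => by cases h)]
          have := hflip.1; rw [hτ] at this; rw [this]
          exact vWt_flip_c htA.1 htA.2
        rw [hold, hnew, div_mul_eq_mul_div, le_div_iff₀ hδ]
        exact mul_le_mul_of_nonneg_left (min_le_left b c) ha.le
    · rw [if_neg hu, one_mul]
      unfold vWtAt
      rw [hout σ u hu .a, hout σ u hu .b, hout σ u hu .c]
  -- per-configuration bound
  have hconf : ∀ σ, (∀ i, tTypeA σ (ends (m i)).1 ∧ tTypeA σ (ends (m i)).2) →
      confWt n a b c σ ≤ (a / δ) ^ (2 * k) * confWt n a b c (Φ σ) := by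
    intro σ hσ
    rw [confWt_eq, confWt_eq]
    calc ∏ u : VF n, vWtAt n a b c σ u
        ≤ ∏ u : VF n, (if u ∈ E then a / δ else 1) * vWtAt n a b c (Φ σ) u :=
          Finset.prod_le_prod (fun u _ => vWt_nonneg ha.le hb.le hc.le _ _ _)
            (fun u _ => hvert σ hσ u)
      _ = (∏ u : VF n, (if u ∈ E then a / δ else 1)) * ∏ u : VF n, vWtAt n a b c (Φ σ) u :=
          Finset.prod_mul_distrib
      _ = (a / δ) ^ (2 * k) * ∏ u : VF n, vWtAt n a b c (Φ σ) u := by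
          congr 1
          rw [← Finset.prod_filter, Finset.filter_mem_eq_inter, Finset.univ_inter,
            Finset.prod_const, hEcard]
  -- sum the bound
  set F := Finset.univ.filter
    (fun σ : ConfF n => ∀ i, tTypeA σ (ends (m i)).1 ∧ tTypeA σ (ends (m i)).2) with hF
  calc ∑ σ ∈ F, confWt n a b c σ
      ≤ ∑ σ ∈ F, (a / δ) ^ (2 * k) * confWt n a b c (Φ σ) := by
        refine Finset.sum_le_sum (fun σ hσ => ?_)
        exact hconf σ (Finset.mem_filter.mp hσ).2
    _ = (a / δ) ^ (2 * k) * ∑ σ ∈ F, confWt n a b c (Φ σ) := by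
        rw [Finset.mul_sum]
    _ ≤ (a / δ) ^ (2 * k) * Zn n a b c := by
        refine mul_le_mul_of_nonneg_left ?_ (by positivity)
        have : ∑ σ ∈ F, confWt n a b c (Φ σ) = ∑ σ ∈ F.image Φ, confWt n a b c σ := by
          rw [Finset.sum_image (fun x _ y _ h => hΦinj h)]
        rw [this]
        exact Finset.sum_le_sum_of_subset_of_nonneg (Finset.subset_univ _)
          (fun σ _ _ => confWt_nonneg n ha.le hb.le hc.le σ)

end H12
namespace H12

/-- The event that the code `s` decodes to an injective type-`a` path of length `L` from `v`. -/
def PathEvt (v : VI) (L : ℕ) (s : ℕ → EType) (ω : Config) : Prop :=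
  Set.InjOn (decPath v s) (Set.Iic L) ∧
    ∀ i < L, aAdj ω (decPath v s i) (decPath v s (i + 1))

/-- The event that there is an injective type-`a` path of length `L` from `v`. -/
def UEvt (v : VI) (L : ℕ) : Set Config := {ω | ∃ s : ℕ → EType, PathEvt v L s ω}

/-- Extension of a finite code. -/
def extCode (L : ℕ) (σ : Fin L → EType) : ℕ → EType :=
  fun i => if h : i < L then σ ⟨i, h⟩ else EType.a

lemma PathEvt_code (v : VI) (L : ℕ) (s : ℕ → EType) (ω : Config)
    (h : PathEvt v L s ω) : PathEvt v L (extCode L (fun i => s i)) ω := by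
  have hd : ∀ i, i ≤ L → decPath v (extCode L (fun i => s i)) i = decPath v s i := by
    intro i hi
    refine decPath_congr v i (fun j hj => ?_)
    rw [extCode]
    rw [dif_pos (lt_of_lt_of_le hj hi)]
  constructor
  · intro i hi j hj heq
    rw [hd i hi, hd j hj] at heq
    exact h.1 hi hj heq
  · intro i hi
    rw [hd i hi.le, hd (i + 1) hi]
    exact h.2 i hi

lemma UEvt_eq (v : VI) (L : ℕ) :
    UEvt v L = ⋃ σ : Fin L → EType, {ω | PathEvt v L (extCode L σ) ω} := by
  ext ω
  simp only [UEvt, Set.mem_iUnion, Set.mem_setOf_eq]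
  constructor
  · rintro ⟨s, hs⟩
    exact ⟨fun i => s i, PathEvt_code v L s ω hs⟩
  · rintro ⟨σ, hσ⟩
    exact ⟨extCode L σ, hσ⟩

lemma measurableSet_eq_coord (e1 e2 : EI) : MeasurableSet {ω : Config | ω e1 = ω e2} := by
  have : {ω : Config | ω e1 = ω e2}
      = (fun ω : Config => (ω e1, ω e2)) ⁻¹' {p : Bool × Bool | p.1 = p.2} := rfl
  rw [this]
  exact ((measurable_pi_apply e1).prodMk (measurable_pi_apply e2))
    ((Set.toFinite _).measurableSet)

lemma measurableSet_typeA (x : VI) : MeasurableSet {ω : Config | typeA ω x} := by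
  have : {ω : Config | typeA ω x} =
      {ω : Config | ω (edgeAt x .b) = ω (edgeAt x .c)} ∩
        {ω : Config | ω (edgeAt x .a) = ω (edgeAt x .b)}ᶜ := rfl
  rw [this]
  exact (measurableSet_eq_coord _ _).inter (measurableSet_eq_coord _ _).compl

lemma measurableSet_PathEvt (v : VI) (L : ℕ) (s : ℕ → EType) :
    MeasurableSet {ω : Config | PathEvt v L s ω} := by
  have : {ω : Config | PathEvt v L s ω} =
      {ω : Config | Set.InjOn (decPath v s) (Set.Iic L)} ∩
        ⋂ i ∈ Finset.range L,
          ({ω : Config | hexAdj (decPath v s i) (decPath v s (i + 1))} ∩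
            ({ω : Config | typeA ω (decPath v s i)} ∩
              {ω : Config | typeA ω (decPath v s (i + 1))})) := by
    ext ω
    simp only [Set.mem_inter_iff, Set.mem_setOf_eq, Set.mem_iInter, Finset.mem_range]
    exact ⟨fun ⟨h1, h2⟩ => ⟨h1, fun i hi => ⟨(h2 i hi).1, (h2 i hi).2.1, (h2 i hi).2.2⟩⟩,
      fun ⟨h1, h2⟩ => ⟨h1, fun i hi => ⟨(h2 i hi).1, (h2 i hi).2.1, (h2 i hi).2.2⟩⟩⟩
  rw [this]
  refine (MeasurableSet.const _).inter (MeasurableSet.biInter (Finset.countable_toSet _)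
    (fun i _ => ((MeasurableSet.const _).inter
      ((measurableSet_typeA _).inter (measurableSet_typeA _)))))

lemma measurableSet_UEvt (v : VI) (L : ℕ) : MeasurableSet (UEvt v L) := by
  rw [UEvt_eq]
  exact MeasurableSet.iUnion (fun σ => measurableSet_PathEvt v L (extCode L σ))

/-- Locality: membership in `UEvt v L` only depends on edges near `v`. -/
lemma UEvt_local (v : VI) (L : ℕ) {ω ω' : Config}
    (h : ∀ e : EI, |e.2.1 - v.1.1| ≤ (L : ℤ) + 1 → |e.2.2 - v.1.2| ≤ (L : ℤ) + 1 → ω e = ω' e) :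
    ω ∈ UEvt v L → ω' ∈ UEvt v L := by
  rintro ⟨s, h1, h2⟩
  refine ⟨s, h1, fun i hi => ?_⟩
  have key : ∀ j, j ≤ L → (typeA ω (decPath v s j) ↔ typeA ω' (decPath v s j)) := by
    intro j hj
    have hcoord := decPath_coord v s j
    have hedge : ∀ t, ω (edgeAt (decPath v s j) t) = ω' (edgeAt (decPath v s j) t) := by
      intro t
      have hc := edgeAt_coord (decPath v s j) t
      refine h _ ?_ ?_
      · have := abs_sub_le (edgeAt (decPath v s j) t).2.1 (decPath v s j).1.1 v.1.1
        have hjL : (j : ℤ) ≤ L := by exact_mod_cast hj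
        linarith [hc.1, hcoord.1]
      · have := abs_sub_le (edgeAt (decPath v s j) t).2.2 (decPath v s j).1.2 v.1.2
        have hjL : (j : ℤ) ≤ L := by exact_mod_cast hj
        linarith [hc.2, hcoord.2]
    unfold typeA
    rw [hedge .a, hedge .b, hedge .c]
  obtain ⟨ha1, ha2, ha3⟩ := h2 i hi
  exact ⟨ha1, (key i hi.le).mp ha2, (key (i + 1) hi).mp ha3⟩

end H12
namespace H12

/-- The simple graph of type-`a` adjacency. -/
def aGraph (ω : Config) : SimpleGraph VI where
  Adj x y := aAdj ω x y ∧ x ≠ y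
  symm := by
    refine ⟨?_⟩
    rintro x y ⟨⟨⟨e, he⟩, t1, t2⟩, hne⟩
    exact ⟨⟨⟨e, he.symm⟩, t2, t1⟩, hne.symm⟩
  loopless := by refine ⟨?_⟩; rintro x ⟨_, hxx⟩; exact hxx rfl

lemma aGraph_walk_coord {ω : Config} {x y : VI} (p : (aGraph ω).Walk x y) :
    |y.1.1 - x.1.1| ≤ (p.length : ℤ) ∧ |y.1.2 - x.1.2| ≤ (p.length : ℤ) := by
  induction p with
  | nil => simp
  | @cons x z y hadj p ih =>
    obtain ⟨⟨hhex, _, _⟩, _⟩ := hadj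
    obtain ⟨t, rfl⟩ := hexAdj_iff.mp hhex
    have hc := otherEnd_coord x t
    have t1 := abs_sub_le y.1.1 (otherEnd x t).1.1 x.1.1
    have t2 := abs_sub_le y.1.2 (otherEnd x t).1.2 x.1.2
    show |y.1.1 - x.1.1| ≤ ((p.length + 1 : ℕ) : ℤ) ∧ |y.1.2 - x.1.2| ≤ ((p.length + 1 : ℕ) : ℤ)
    push_cast
    constructor
    · have h1 := abs_sub_comm (otherEnd x t).1.1 x.1.1
      linarith [ih.1, hc.1, t1]
    · have h2 := abs_sub_comm (otherEnd x t).1.2 x.1.2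
      linarith [ih.2, hc.2, t2]

lemma infinite_cluster_mem_UEvt (ω : Config) (v : VI)
    (h : (aCluster ω v).Infinite) (L : ℕ) : ω ∈ UEvt v L := by
  classical
  -- reachability in the simple graph
  have hreach : ∀ u ∈ aCluster ω v, (aGraph ω).Reachable v u := by
    intro u hu
    rw [SimpleGraph.reachable_iff_reflTransGen]
    induction hu with
    | refl => exact Relation.ReflTransGen.refl
    | @tail p q hp hpq ih =>
      by_cases hpq' : p = q
      · exact hpq' ▸ ih
      · exact ih.tail ⟨hpq, hpq'⟩
  -- a far-away vertex in the cluster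
  have hball : {u : VI | |u.1.1 - v.1.1| ≤ (L : ℤ) ∧ |u.1.2 - v.1.2| ≤ (L : ℤ)}.Finite := by
    refine Set.Finite.subset (Set.Finite.prod
      (Set.Finite.prod (Set.finite_Icc (v.1.1 - L) (v.1.1 + L))
        (Set.finite_Icc (v.1.2 - L) (v.1.2 + L))) (Set.finite_univ (α := Bool))) ?_
    rintro ⟨⟨p, q⟩, b⟩ ⟨h1, h2⟩
    rw [abs_le] at h1 h2
    simp only [Set.mem_prod, Set.mem_Icc, Set.mem_univ, and_true]
    constructor <;> constructor <;> linarith [h1.1, h1.2, h2.1, h2.2]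
  obtain ⟨u, hu⟩ := (h.diff hball).nonempty
  have hu_cl : u ∈ aCluster ω v := hu.1
  have hu_far : ¬(|u.1.1 - v.1.1| ≤ (L : ℤ) ∧ |u.1.2 - v.1.2| ≤ (L : ℤ)) := hu.2
  obtain ⟨p⟩ := hreach u hu_cl
  set q := p.bypass with hq
  have hqpath : q.IsPath := p.bypass_isPath
  have hnd : q.support.Nodup := hqpath.support_nodup
  have hlensup : q.support.length = q.length + 1 := q.length_support
  have hLlen : L < q.length := by
    by_contra hcon
    push_neg at hcon
    have hc := aGraph_walk_coord q
    have : (q.length : ℤ) ≤ (L : ℤ) := by exact_mod_cast hcon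
    exact hu_far ⟨le_trans hc.1 this, le_trans hc.2 this⟩
  set l := q.support with hl
  set pth : ℕ → VI := fun i => l.getD i v with hpth
  have hlen : L + 1 < l.length := by rw [hl, hlensup]; omega
  have hget : ∀ i (hi : i < l.length), pth i = l.get ⟨i, hi⟩ := by
    intro i hi
    rw [hpth]
    simp only
    rw [List.getD_eq_getElem l v hi]
    rfl
  have hchain : List.IsChain (aGraph ω).Adj l := q.isChain_adj_support
  have hadj : ∀ i, i < L → (aGraph ω).Adj (pth i) (pth (i + 1)) := by
    intro i hi
    have h1 : i < l.length - 1 := by omega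
    have := List.isChain_iff_getElem.mp hchain i (by omega)
    rw [hget i (by omega), hget (i + 1) (by omega)]
    exact this
  have hstep : ∀ i, i < L → ∃ t, pth (i + 1) = otherEnd (pth i) t := by
    intro i hi
    exact hexAdj_iff.mp (hadj i hi).1.1
  set s : ℕ → EType := fun i =>
    if h : i < L then Classical.choose (hstep i h) else EType.a with hs
  have hdec : ∀ i, i ≤ L → decPath v s i = pth i := by
    intro i hi
    induction i with
    | zero =>
      have h0 : pth 0 = v := by
        show l.getD 0 v = v
        rw [hl, q.support_eq_cons]
        simp
      rw [h0]; rfl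
    | succ i ih =>
      have hiL : i < L := by omega
      have : decPath v s (i + 1) = otherEnd (decPath v s i) (s i) := rfl
      rw [this, ih (by omega), hs]
      simp only
      rw [dif_pos hiL]
      exact (Classical.choose_spec (hstep i hiL)).symm
  refine ⟨s, ?_, ?_⟩
  · intro i hi j hj heq
    simp only [Set.mem_Iic] at hi hj
    have hi' : i < l.length := by omega
    have hj' : j < l.length := by omega
    rw [hdec i hi, hdec j hj, hget i hi', hget j hj'] at heq
    have hinj := List.nodup_iff_injective_get.mp hnd heq
    exact congrArg Fin.val hinj
  · intro i hi
    rw [hdec i hi.le, hdec (i + 1) hi]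
    exact (hadj i hi).1

end H12
namespace H12

open scoped Classical

lemma code_sum_le (n : ℕ) [NeZero n] {a b c : ℝ} (ha : 0 < a) (hb : 0 < b) (hc : 0 < c)
    (v : VI) (k : ℕ) (scode : ℕ → EType)
    (hn : 2 * (|v.1.1| + |v.1.2| + (4 * k : ℤ) + 1) < (n : ℤ)) :
    ∑ σc ∈ Finset.univ.filter
        (fun σc : ConfF n => PathEvt v (4 * k) scode (liftConf n σc)),
      confWt n a b c σc ≤ (a / min b c) ^ (2 * k) * Zn n a b c := by
  set L := 4 * k with hL
  set x := decPath v scode with hx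
  by_cases hInj : Set.InjOn (decPath v scode) (Set.Iic L)
  case neg =>
    have hempty : Finset.univ.filter
        (fun σc : ConfF n => PathEvt v L scode (liftConf n σc)) = ∅ := by
      refine Finset.filter_false_of_mem (fun σc _ hP => hInj hP.1)
    rw [hempty, Finset.sum_empty]
    exact mul_nonneg (by positivity) (Zn_pos n ha hb hc).le
  case pos =>
  -- basic coordinate facts
  have hcoord : ∀ j, j ≤ L → |(x j).1.1| ≤ |v.1.1| + (L : ℤ) ∧
      |(x j).1.2| ≤ |v.1.2| + (L : ℤ) := by
    intro j hj
    have hd := decPath_coord v scode j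
    have hjL : (j : ℤ) ≤ (L : ℤ) := by exact_mod_cast hj
    constructor
    · have := abs_sub_le (x j).1.1 v.1.1 0
      simp only [sub_zero] at this
      have h2 : |v.1.1 - 0| = |v.1.1| := by rw [sub_zero]
      linarith [hd.1]
    · have := abs_sub_le (x j).1.2 v.1.2 0
      simp only [sub_zero] at this
      linarith [hd.2]
  have hxinj : ∀ j j', j ≤ L → j' ≤ L → pV n (x j) = pV n (x j') → j = j' := by
    intro j j' hj hj' hpv
    have h1 := hcoord j hj
    have h2 := hcoord j' hj'
    have hLk : (L : ℤ) = 4 * (k : ℤ) := by rw [hL]; push_cast; ring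
    have hB : 2 * (|v.1.1| + |v.1.2| + (L : ℤ)) < (n : ℤ) := by rw [hLk]; linarith
    have hxx : x j = x j' := by
      refine pV_inj (B := |v.1.1| + |v.1.2| + (L : ℤ)) ?_ ?_ ?_ ?_ hB hpv
      · have := abs_nonneg v.1.2; linarith [h1.1]
      · have := abs_nonneg v.1.1; linarith [h1.2]
      · have := abs_nonneg v.1.2; linarith [h2.1]
      · have := abs_nonneg v.1.1; linarith [h2.2]
    exact hInj (Set.mem_Iic.mpr hj) (Set.mem_Iic.mpr hj') hxx
  -- choose non-a steps
  have hpick : ∀ i : Fin k, ∃ j, (j = 4 * i.val ∨ j = 4 * i.val + 1) ∧ scode j ≠ EType.a := by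
    intro i
    by_contra hcon
    push_neg at hcon
    have ha1 : scode (4 * i.val) = EType.a := by
      by_contra h'; exact h' (hcon (4 * i.val) (Or.inl rfl))
    have ha2 : scode (4 * i.val + 1) = EType.a := by
      by_contra h'; exact h' (hcon (4 * i.val + 1) (Or.inr rfl))
    have hdd : x (4 * i.val + 2) = x (4 * i.val) := by
      show otherEnd (otherEnd (x (4 * i.val)) (scode (4 * i.val))) (scode (4 * i.val + 1))
          = x (4 * i.val)
      rw [ha1, ha2, otherEnd_a_a]
    have hik : i.val < k := i.isLt
    have := hInj (Set.mem_Iic.mpr (by omega : 4 * i.val + 2 ≤ L))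
      (Set.mem_Iic.mpr (by omega : 4 * i.val ≤ L)) hdd
    omega
  choose g hg1 hg2 using hpick
  have hgL : ∀ i : Fin k, g i + 1 ≤ L := by
    intro i; have := i.isLt; rcases hg1 i with h | h <;> omega
  -- edges
  set m : Fin k → EF n := fun i => pE n (edgeAt (x (g i)) (scode (g i))) with hm
  have hma : ∀ i, (m i).1 ≠ EType.a := by
    intro i
    rw [hm]
    show (pE n (edgeAt (x (g i)) (scode (g i)))).1 ≠ EType.a
    rw [pE_fst, edgeAt_fst]
    exact hg2 i
  have hxsucc : ∀ j, x (j + 1) = otherEnd (x j) (scode j) := fun j => rfl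
  have hends : ∀ i, ends (m i) = (pV n (x (g i)), pV n (x (g i + 1))) ∨
      ends (m i) = (pV n (x (g i + 1)), pV n (x (g i))) := by
    intro i
    rcases ends_edgeAt (x (g i)) (scode (g i)) with h | h
    · left; rw [hm]; show ends (pE n _) = _
      rw [ends_pE, h, hxsucc]
    · right; rw [hm]; show ends (pE n _) = _
      rw [ends_pE, h, hxsucc]
  -- index of each endpoint
  set idx : Fin k × Bool → ℕ := fun z =>
    if ends (m z.1) = (pV n (x (g z.1)), pV n (x (g z.1 + 1)))
    then (if z.2 then g z.1 else g z.1 + 1)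
    else (if z.2 then g z.1 + 1 else g z.1) with hidxdef
  have hidx_spec : ∀ z : Fin k × Bool,
      (if z.2 then (ends (m z.1)).1 else (ends (m z.1)).2) = pV n (x (idx z)) := by
    intro z
    simp only [hidxdef]
    by_cases hcase : ends (m z.1) = (pV n (x (g z.1)), pV n (x (g z.1 + 1)))
    · rw [if_pos hcase, hcase]
      cases hz : z.2 <;> simp [hz]
    · have h := (hends z.1).resolve_left hcase
      rw [if_neg hcase, h]
      cases hz : z.2 <;> simp [hz]
  have hidx_range : ∀ z : Fin k × Bool, idx z = g z.1 ∨ idx z = g z.1 + 1 := by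
    intro z
    simp only [hidxdef]
    split_ifs <;> simp
  have hidx_ne : ∀ (i : Fin k), idx (i, true) ≠ idx (i, false) := by
    intro i
    simp [hidxdef]
    split_ifs <;> omega
  -- injectivity of the endpoint map
  have hinj : Function.Injective fun z : Fin k × Bool =>
      if z.2 then (ends (m z.1)).1 else (ends (m z.1)).2 := by
    intro z z' hzz
    simp only [hidx_spec] at hzz
    have hzL : idx z ≤ L := by
      rcases hidx_range z with h | h <;> (rw [h]; have := hgL z.1; omega)
    have hz'L : idx z' ≤ L := by
      rcases hidx_range z' with h | h <;> (rw [h]; have := hgL z'.1; omega)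
    have hidxeq : idx z = idx z' := hxinj _ _ hzL hz'L hzz
    have hfst : z.1 = z'.1 := by
      by_contra hne
      have hv : z.1.val ≠ z'.1.val := fun h => hne (Fin.ext h)
      rcases hidx_range z with h1 | h1 <;> rcases hidx_range z' with h2 | h2 <;>
        (rcases hg1 z.1 with h3 | h3 <;> rcases hg1 z'.1 with h4 | h4 <;> omega)
    have hsnd : z.2 = z'.2 := by
      by_contra hne
      rcases Bool.eq_false_or_eq_true z.2 with hb | hb <;>
        rcases Bool.eq_false_or_eq_true z'.2 with hb' | hb' <;>
          first
          | (exact hne (hb.trans hb'.symm))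
          | (obtain ⟨i1, s1⟩ := z; obtain ⟨i2, s2⟩ := z'
             simp only at hb hb' hfst
             subst hb; subst hb'; subst hfst
             first
             | exact hidx_ne i1 hidxeq
             | exact hidx_ne i1 hidxeq.symm)
    exact Prod.ext hfst hsnd
  -- the path event implies the flip event
  have hsub : Finset.univ.filter
      (fun σc : ConfF n => PathEvt v L scode (liftConf n σc)) ⊆
      Finset.univ.filter
        (fun σc : ConfF n => ∀ i, tTypeA σc (ends (m i)).1 ∧ tTypeA σc (ends (m i)).2) := by
    intro σc hσc
    rw [Finset.mem_filter] at hσc ⊢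
    refine ⟨Finset.mem_univ _, fun i => ?_⟩
    have hstep := hσc.2.2 (g i) (by have := hgL i; omega)
    have ht1 : tTypeA σc (pV n (x (g i))) := (typeA_lift_iff n σc _).mp hstep.2.1
    have ht2 : tTypeA σc (pV n (x (g i + 1))) := (typeA_lift_iff n σc _).mp hstep.2.2
    rcases hends i with h | h <;> rw [h]
    exacts [⟨ht1, ht2⟩, ⟨ht2, ht1⟩]
  calc ∑ σc ∈ Finset.univ.filter
        (fun σc : ConfF n => PathEvt v L scode (liftConf n σc)), confWt n a b c σc
      ≤ ∑ σc ∈ Finset.univ.filter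
          (fun σc : ConfF n => ∀ i, tTypeA σc (ends (m i)).1 ∧ tTypeA σc (ends (m i)).2),
          confWt n a b c σc :=
        Finset.sum_le_sum_of_subset_of_nonneg hsub
          (fun σc _ _ => confWt_nonneg n ha.le hb.le hc.le σc)
    _ ≤ (a / min b c) ^ (2 * k) * Zn n a b c := flip_sum_le n ha hb hc k m hma hinj

lemma muHat_code_le (n : ℕ) [NeZero n] {a b c : ℝ} (ha : 0 < a) (hb : 0 < b) (hc : 0 < c)
    (v : VI) (k : ℕ) (scode : ℕ → EType)
    (hn : 2 * (|v.1.1| + |v.1.2| + (4 * k : ℤ) + 1) < (n : ℤ)) :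
    muHat n a b c {ω : Config | PathEvt v (4 * k) scode ω} ≤
      ENNReal.ofReal ((a / min b c) ^ (2 * k)) := by
  set A := {ω : Config | PathEvt v (4 * k) scode ω} with hA
  have hAm : MeasurableSet A := measurableSet_PathEvt v (4 * k) scode
  have hZ : 0 < Zn n a b c := Zn_pos n ha hb hc
  rw [muHat, Measure.finset_sum_apply]
  have hterm : ∀ σc : ConfF n,
      (ENNReal.ofReal (confWt n a b c σc / Zn n a b c) • Measure.dirac (liftConf n σc)) A =
        if PathEvt v (4 * k) scode (liftConf n σc)
        then ENNReal.ofReal (confWt n a b c σc / Zn n a b c) else 0 := by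
    intro σc
    rw [Measure.smul_apply, Measure.dirac_apply' _ hAm, smul_eq_mul]
    by_cases hmem : PathEvt v (4 * k) scode (liftConf n σc)
    · rw [if_pos hmem, Set.indicator_of_mem (show liftConf n σc ∈ A from hmem),
        Pi.one_apply, mul_one]
    · rw [if_neg hmem, Set.indicator_of_notMem (show liftConf n σc ∉ A from hmem), mul_zero]
  rw [Finset.sum_congr rfl (fun σc _ => hterm σc), ← Finset.sum_filter]
  rw [← ENNReal.ofReal_sum_of_nonneg
    (fun σc _ => div_nonneg (confWt_nonneg n ha.le hb.le hc.le σc) hZ.le)]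
  refine ENNReal.ofReal_le_ofReal ?_
  rw [← Finset.sum_div, div_le_iff₀ hZ]
  exact code_sum_le n ha hb hc v k scode hn

lemma muHat_UEvt_le (n : ℕ) [NeZero n] {a b c : ℝ} (ha : 0 < a) (hb : 0 < b) (hc : 0 < c)
    (v : VI) (k : ℕ)
    (hn : 2 * (|v.1.1| + |v.1.2| + (4 * k : ℤ) + 1) < (n : ℤ)) :
    muHat n a b c (UEvt v (4 * k)) ≤
      ENNReal.ofReal ((3 : ℝ) ^ (4 * k) * (a / min b c) ^ (2 * k)) := by
  rw [UEvt_eq]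
  refine le_trans (measure_iUnion_le _) ?_
  rw [tsum_fintype]
  refine le_trans (Finset.sum_le_sum
    (fun σ _ => muHat_code_le n ha hb hc v k (extCode (4 * k) σ) hn)) ?_
  rw [Finset.sum_const, Finset.card_univ]
  have hET : Fintype.card EType = 3 := rfl
  have hcard : Fintype.card (Fin (4 * k) → EType) = 3 ^ (4 * k) := by
    rw [Fintype.card_fun, hET, Fintype.card_fin]
  rw [hcard, nsmul_eq_mul]
  rw [← ENNReal.ofReal_natCast (3 ^ (4 * k)), ← ENNReal.ofReal_mul (by positivity)]
  refine ENNReal.ofReal_le_ofReal ?_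
  push_cast
  exact le_refl _

end H12
namespace H12

lemma hSfin (v : VI) (L : ℕ) :
    {e : EI | |e.2.1 - v.1.1| ≤ (L : ℤ) + 1 ∧ |e.2.2 - v.1.2| ≤ (L : ℤ) + 1}.Finite := by
  refine Set.Finite.subset (Set.Finite.prod (Set.finite_univ (α := EType))
    (Set.Finite.prod (Set.finite_Icc (v.1.1 - (L + 1)) (v.1.1 + (L + 1)))
      (Set.finite_Icc (v.1.2 - (L + 1)) (v.1.2 + (L + 1))))) ?_
  rintro ⟨t, p, q⟩ ⟨h1, h2⟩
  rw [abs_le] at h1 h2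
  simp only [Set.mem_prod, Set.mem_univ, Set.mem_Icc, true_and]
  constructor <;> constructor <;> linarith [h1.1, h1.2, h2.1, h2.2]

/-- The indicator of `UEvt v L` as a bounded continuous function. -/
noncomputable def indUF (v : VI) (L : ℕ) : BoundedContinuousFunction Config ℝ := by
  classical
  refine BoundedContinuousFunction.ofNormedAddCommGroup
    (Set.indicator (UEvt v L) 1) ?_ 1 ?_
  · -- continuity
    set S : Set EI :=
      {e : EI | |e.2.1 - v.1.1| ≤ (L : ℤ) + 1 ∧ |e.2.2 - v.1.2| ≤ (L : ℤ) + 1} with hS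
    have hfin : S.Finite := hSfin v L
    have := hfin.to_subtype
    set ext : (↥S → Bool) → Config := fun ρ e => if h : e ∈ S then ρ ⟨e, h⟩ else false
      with hext
    set res : Config → (↥S → Bool) := fun ω e => ω e.1 with hres
    have hmem : ∀ ω : Config, ext (res ω) ∈ UEvt v L ↔ ω ∈ UEvt v L := by
      intro ω
      have hagree : ∀ e : EI, |e.2.1 - v.1.1| ≤ (L : ℤ) + 1 →
          |e.2.2 - v.1.2| ≤ (L : ℤ) + 1 → ext (res ω) e = ω e := by
        intro e he1 he2
        have heS : e ∈ S := ⟨he1, he2⟩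
        simp only [hext, hres, dif_pos heS]
      constructor
      · exact UEvt_local v L (fun e he1 he2 => (hagree e he1 he2))
      · exact UEvt_local v L (fun e he1 he2 => (hagree e he1 he2).symm)
    have hfactor : Set.indicator (UEvt v L) (1 : Config → ℝ) =
        (fun ρ : ↥S → Bool => Set.indicator (UEvt v L) (1 : Config → ℝ) (ext ρ)) ∘ res := by
      funext ω
      simp only [Function.comp_apply, Set.indicator_apply, Pi.one_apply]
      exact if_congr (hmem ω).symm rfl rfl
    rw [hfactor]
    exact Continuous.comp continuous_of_discreteTopology
      (continuous_pi (fun e => continuous_apply e.1))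
  · -- bound
    intro x
    by_cases h : x ∈ UEvt v L
    · rw [Set.indicator_of_mem h]; simp
    · rw [Set.indicator_of_notMem h]; simp

lemma indUF_integral (v : VI) (L : ℕ) (μ : Measure Config) :
    ∫ ω, indUF v L ω ∂μ = (μ (UEvt v L)).toReal := by
  have hcoe : (indUF v L : Config → ℝ) = Set.indicator (UEvt v L) 1 := rfl
  rw [hcoe]
  exact MeasureTheory.integral_indicator_one (measurableSet_UEvt v L)

end H12
/-- Fix `b,c > 0`. For all sufficiently small `a > 0`, the weak
limit `μ̄` of `(μ̂_n)` almost surely has no infinite type-`a` cluster. -/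
theorem no_infinite_typeA_cluster_small_a
    (b c : ℝ) (hb : 0 < b) (hc : 0 < c) :
    ∃ a₀ : ℝ, 0 < a₀ ∧ ∀ a : ℝ, 0 < a → a < a₀ →
      ∀ μbar : Measure Config, IsWeakLimit a b c μbar →
        μbar {ω : Config | ∃ v : VI, (aCluster ω v).Infinite} = 0 := by
  classical
  have hδ : 0 < min b c := lt_min hb hc
  refine ⟨min b c / 9, by positivity, ?_⟩
  rintro a ha haa μbar ⟨hprob, hconv⟩
  set δ := min b c with hδdef
  set ρ := 81 * (a / δ) ^ 2 with hρdef
  have hρ0 : 0 ≤ ρ := by positivity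
  have hρ1 : ρ < 1 := by
    have h1 : a / δ < 1 / 9 := by
      rw [div_lt_div_iff₀ hδ (by norm_num : (0:ℝ) < 9)]
      linarith
    have h2 : (a / δ) ^ 2 < (1 / 9) ^ 2 :=
      pow_lt_pow_left₀ h1 (div_nonneg ha.le hδ.le) (by norm_num)
    rw [hρdef]
    nlinarith
  have hv : ∀ v : VI, μbar {ω : Config | (aCluster ω v).Infinite} = 0 := by
    intro v
    have hk : ∀ k : ℕ, μbar {ω : Config | (aCluster ω v).Infinite} ≤
        ENNReal.ofReal (ρ ^ k) := by
      intro k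
      have hsubset : {ω : Config | (aCluster ω v).Infinite} ⊆ H12.UEvt v (4 * k) :=
        fun ω hω => H12.infinite_cluster_mem_UEvt ω v hω (4 * k)
      refine le_trans (measure_mono hsubset) ?_
      have hbnd : (3 : ℝ) ^ (4 * k) * (a / δ) ^ (2 * k) = ρ ^ k := by
        rw [hρdef, mul_pow, ← pow_mul, show (81:ℝ) = 3 ^ 4 by norm_num, ← pow_mul]
      have hev : ∀ᶠ nn in (atTop : Filter ℕ),
          ∫ ω, H12.indUF v (4 * k) ω ∂ muHat (nn + 1) a b c ≤ ρ ^ k := by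
        set T : ℤ := 2 * (|v.1.1| + |v.1.2| + (4 * k : ℤ) + 1) with hT
        refine Filter.eventually_atTop.mpr ⟨T.toNat + 1, fun nn hnn => ?_⟩
        have hTn : T < ((nn + 1 : ℕ) : ℤ) := by
          have h1 : T ≤ (T.toNat : ℤ) := Int.self_le_toNat T
          have h2 : (T.toNat : ℤ) + 1 ≤ (nn : ℤ) := by exact_mod_cast hnn
          push_cast
          linarith
        rw [H12.indUF_integral]
        have hle := H12.muHat_UEvt_le (nn + 1) ha hb hc v k hTn
        have h3 : (muHat (nn + 1) a b c (H12.UEvt v (4 * k))).toReal ≤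
            (3 : ℝ) ^ (4 * k) * (a / δ) ^ (2 * k) :=
          ENNReal.toReal_le_of_le_ofReal (by positivity) hle
        rw [← hbnd]
        exact h3
      have hlim := hconv (H12.indUF v (4 * k))
      rw [H12.indUF_integral] at hlim
      have h3 : (μbar (H12.UEvt v (4 * k))).toReal ≤ ρ ^ k := le_of_tendsto hlim hev
      exact (ENNReal.le_ofReal_iff_toReal_le (measure_ne_top μbar _) (by positivity)).mpr h3
    have htend : Filter.Tendsto (fun k : ℕ => ENNReal.ofReal (ρ ^ k)) atTop (𝓝 0) := by
      have := ENNReal.tendsto_ofReal (tendsto_pow_atTop_nhds_zero_of_lt_one hρ0 hρ1)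
      simpa using this
    exact le_antisymm (ge_of_tendsto' htend hk) zero_le'
  have hU : {ω : Config | ∃ v : VI, (aCluster ω v).Infinite} =
      ⋃ v : VI, {ω : Config | (aCluster ω v).Infinite} := by
    ext ω; simp [Set.mem_iUnion]
  rw [hU]
  refine le_antisymm (le_trans (measure_iUnion_le _) ?_) zero_le'
  simp [hv]
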